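/- Let y be a fractional cache state and let X be a random integral cache state such that for every i ∈ {1,…,K−1}: E[ ∏_{j ∈ I_i} (1 − X_{π_j}/(k − σ_i)) ] ≤ ∏_{j ∈ I_i} (1 − y_{π_j}/(k − σ_i)). Then the expected caching gain of X satisfies E[ G(X) ] ≥ (1 − 1/e) · G(y). -/

import Mathlib

open MeasureTheory

namespace ACAI

/-- `sigma N π i` = number of indices `j ∈ {1,…,i}` with `π j > N`, i.e. the number of
objects among the `i` cheapest that are served from the server. -/
def sigma (N : ℕ) (π : ℕ → ℕ) (i : ℕ) : ℕ :=
  ((Finset.Icc 1 i).filter (fun j => N < π j)).card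

/-- `Kmin N k π` = least index `i` with `sigma N π i = k`. -/
noncomputable def Kmin (N k : ℕ) (π : ℕ → ℕ) : ℕ :=
  sInf {i | sigma N π i = k}

/-- `alpha c π i = c (π (i+1)) - c (π i)`. -/
noncomputable def alpha (c : ℕ → ℝ) (π : ℕ → ℕ) (i : ℕ) : ℝ :=
  c (π (i + 1)) - c (π i)

/-- A fractional cache state: `y ∈ [0,1]^{2N}` with `∑_{i=1}^{N} y i = h` and
`y (i+N) = 1 - y i` for `i ∈ {1,…,N}`. -/
def IsFrac (N h : ℕ) (y : ℕ → ℝ) : Prop :=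
  (∀ i ∈ Finset.Icc 1 (2 * N), y i ∈ Set.Icc (0 : ℝ) 1) ∧
  (∑ i ∈ Finset.Icc 1 N, y i = (h : ℝ)) ∧
  (∀ i ∈ Finset.Icc 1 N, y (i + N) = 1 - y i)

/-- An integral cache state: a fractional cache state with `{0,1}` coordinates. -/
def IsInt (N h : ℕ) (y : ℕ → ℝ) : Prop :=
  IsFrac N h y ∧ ∀ i ∈ Finset.Icc 1 (2 * N), y i = 0 ∨ y i = 1

/-- A request over the augmented catalog `U = {1,…,2N}`: nonnegative costs `c` with
`c (i+N) = c i + cf` for catalog objects `i ∈ {1,…,N}`, and a bijection `π` of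
`{1,…,2N}` sorting the costs nondecreasingly and placing each `i ∈ {1,…,N}` before
`i + N`. -/
def Request (N : ℕ) (cf : ℝ) (c : ℕ → ℝ) (π : ℕ → ℕ) : Prop :=
  (∀ i ∈ Finset.Icc 1 (2 * N), 0 ≤ c i) ∧
  (∀ i ∈ Finset.Icc 1 N, c (i + N) = c i + cf) ∧
  Set.BijOn π (Set.Icc 1 (2 * N)) (Set.Icc 1 (2 * N)) ∧
  (∀ i, 1 ≤ i → i < 2 * N → c (π i) ≤ c (π (i + 1))) ∧
  (∀ j l, j ∈ Set.Icc 1 (2 * N) → l ∈ Set.Icc 1 (2 * N) →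
    π j ≤ N → π l = π j + N → j < l)

/-- The caching gain
`G(y) = ∑_{i=1}^{K-1} α_i · min { k - σ_i, (∑_{j=1}^{i} y_{π j}) - σ_i }`. -/
noncomputable def gain (N k : ℕ) (c : ℕ → ℝ) (π : ℕ → ℕ) (y : ℕ → ℝ) : ℝ :=
  ∑ i ∈ Finset.Icc 1 (Kmin N k π - 1),
    alpha c π i *
      min ((k : ℝ) - sigma N π i) ((∑ j ∈ Finset.Icc 1 i, y (π j)) - sigma N π i)

/-- `Iset N π i = { j ∈ {1,…,i} : π j ≤ N and π j + N ∉ {π 1, …, π i} }`. -/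
def Iset (N : ℕ) (π : ℕ → ℕ) (i : ℕ) : Finset ℕ :=
  (Finset.Icc 1 i).filter (fun j => π j ≤ N ∧ ∀ l ∈ Finset.Icc (1 : ℕ) i, π l ≠ π j + N)

/-- The auxiliary (multilinear) gain
`L(y) = ∑_{i=1}^{K-1} α_i (k - σ_i) (1 - ∏_{j ∈ I_i} (1 - y_{π j}/(k - σ_i)))`. -/
noncomputable def aux (N k : ℕ) (c : ℕ → ℝ) (π : ℕ → ℕ) (y : ℕ → ℝ) : ℝ :=
  ∑ i ∈ Finset.Icc 1 (Kmin N k π - 1),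
    alpha c π i * ((k : ℝ) - sigma N π i) *
      (1 - ∏ j ∈ Iset N π i, (1 - y (π j) / ((k : ℝ) - sigma N π i)))

lemma sigma_mono (N : ℕ) (π : ℕ → ℕ) : Monotone (sigma N π) := by
  intro a b hab
  exact Finset.card_le_card (Finset.filter_subset_filter _ (Finset.Icc_subset_Icc le_rfl hab))

lemma sigma_succ (N : ℕ) (π : ℕ → ℕ) (j : ℕ) : sigma N π (j + 1) ≤ sigma N π j + 1 := by
  have hsub : (Finset.Icc 1 (j+1)).filter (fun a => N < π a) ⊆
      insert (j+1) ((Finset.Icc 1 j).filter (fun a => N < π a)) := by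
    intro a ha
    simp only [Finset.mem_filter, Finset.mem_Icc, Finset.mem_insert] at *
    omega
  calc ((Finset.Icc 1 (j+1)).filter (fun a => N < π a)).card
      ≤ (insert (j+1) ((Finset.Icc 1 j).filter (fun a => N < π a))).card :=
        Finset.card_le_card hsub
    _ ≤ _ + 1 := Finset.card_insert_le _ _

lemma sigma_twoN (N : ℕ) (π : ℕ → ℕ)
    (hbij : Set.BijOn π (Set.Icc 1 (2*N)) (Set.Icc 1 (2*N))) :
    sigma N π (2*N) = N := by
  have hcard : ((Finset.Icc 1 (2*N)).filter (fun j => N < π j)).card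
      = (Finset.Icc (N+1) (2*N)).card := by
    apply Finset.card_nbij π
    · intro a ha
      simp only [Finset.mem_coe, Finset.coe_filter, Finset.mem_filter, Set.mem_setOf_eq, Finset.mem_Icc] at ha
      have := hbij.mapsTo (show a ∈ Set.Icc 1 (2*N) from ⟨ha.1.1, by omega⟩)
      simp only [Set.mem_Icc] at this
      simp only [Finset.mem_coe, Finset.mem_Icc]
      omega
    · intro a ha b hb hab
      simp only [Finset.coe_filter, Set.mem_setOf_eq, Finset.mem_Icc] at ha hb
      exact hbij.injOn ⟨ha.1.1, by omega⟩ ⟨hb.1.1, by omega⟩ hab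
    · intro m hm
      simp only [Finset.coe_sort_coe, Finset.mem_coe, Finset.mem_Icc] at hm
      obtain ⟨a, ha, rfl⟩ := hbij.surjOn (show m ∈ Set.Icc 1 (2*N) from ⟨by omega, by omega⟩)
      simp only [Set.mem_Icc] at ha
      refine ⟨a, ?_, rfl⟩
      simp only [Finset.coe_filter, Set.mem_setOf_eq, Finset.mem_Icc]
      omega
  show ((Finset.Icc 1 (2*N)).filter (fun j => N < π j)).card = N
  rw [hcard, Nat.card_Icc]
  omega

lemma Kmin_le_twoN (N k : ℕ) (π : ℕ → ℕ) (hk : 0 < k) (hkN : k ≤ N)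
    (hbij : Set.BijOn π (Set.Icc 1 (2*N)) (Set.Icc 1 (2*N))) :
    Kmin N k π ≤ 2*N := by
  have hT2N : 2*N ∈ {i | k ≤ sigma N π i} := by
    simp only [Set.mem_setOf_eq, sigma_twoN N π hbij]; exact hkN
  have hne : {i | k ≤ sigma N π i}.Nonempty := ⟨2*N, hT2N⟩
  have hmem : sInf {i | k ≤ sigma N π i} ∈ {i | k ≤ sigma N π i} := Nat.sInf_mem hne
  set m := sInf {i | k ≤ sigma N π i} with hm
  simp only [Set.mem_setOf_eq] at hmem
  have hm2N : m ≤ 2*N := Nat.sInf_le hT2N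
  have hm0 : m ≠ 0 := by
    intro h0
    rw [h0] at hmem
    simp [sigma] at hmem
    omega
  have hml : m - 1 ∉ {i | k ≤ sigma N π i} := Nat.notMem_of_lt_sInf (by omega)
  have hlt : sigma N π (m-1) < k := by
    simpa only [Set.mem_setOf_eq, not_le] using hml
  have hsu : sigma N π m ≤ sigma N π (m-1) + 1 := by
    have := sigma_succ N π (m-1)
    rwa [Nat.sub_add_cancel (by omega)] at this
  have heq : sigma N π m = k := by omega
  calc Kmin N k π ≤ m := Nat.sInf_le heq
    _ ≤ 2*N := hm2N

lemma mem_facts (N k : ℕ) (π : ℕ → ℕ) (hN : 0 < N) (hk : 0 < k) (hkN : k ≤ N)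
    (hbij : Set.BijOn π (Set.Icc 1 (2*N)) (Set.Icc 1 (2*N)))
    {i : ℕ} (hi : i ∈ Finset.Icc 1 (Kmin N k π - 1)) :
    1 ≤ i ∧ i < 2*N ∧ sigma N π i < k := by
  simp only [Finset.mem_Icc] at hi
  have hSne : {j | sigma N π j = k}.Nonempty := by
    by_contra hc
    rw [Set.not_nonempty_iff_eq_empty] at hc
    have h0 : Kmin N k π = 0 := by rw [Kmin, hc]; exact Nat.sInf_empty
    omega
  have hKmem : sigma N π (Kmin N k π) = k := Nat.sInf_mem hSne
  have hiK : i < Kmin N k π := by omega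
  have hne : sigma N π i ≠ k := fun hc => absurd hiK (not_lt.2 (Nat.sInf_le hc))
  have hle : sigma N π i ≤ k := hKmem ▸ sigma_mono N π hiK.le
  have hK2N : Kmin N k π ≤ 2*N := Kmin_le_twoN N k π hk hkN hbij
  exact ⟨hi.1, by omega, lt_of_le_of_ne hle hne⟩

lemma sum_sub_sigma (N h i : ℕ) (π : ℕ → ℕ)
    (hbij : Set.BijOn π (Set.Icc 1 (2*N)) (Set.Icc 1 (2*N)))
    (horder : ∀ j l, j ∈ Set.Icc 1 (2*N) → l ∈ Set.Icc 1 (2*N) →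
      π j ≤ N → π l = π j + N → j < l)
    (x : ℕ → ℝ) (hx : IsFrac N h x) (hi : i ≤ 2*N) :
    (∑ j ∈ Finset.Icc 1 i, x (π j)) - (sigma N π i : ℝ) = ∑ j ∈ Iset N π i, x (π j) := by
  classical
  set τ : ℕ → ℕ := Function.invFunOn π (Set.Icc 1 (2*N)) with hτ
  have hTs : ∀ j ∈ Finset.Icc 1 i, j ∈ Set.Icc 1 (2*N) := by
    intro j hj
    simp only [Finset.mem_Icc] at hj
    exact ⟨hj.1, by omega⟩
  have hπmem : ∀ j ∈ Finset.Icc 1 i, π j ∈ Set.Icc 1 (2*N) :=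
    fun j hj => hbij.mapsTo (hTs j hj)
  set A : Finset ℕ := (Finset.Icc 1 i).filter (fun j => N < π j) with hA
  set B : Finset ℕ := (Finset.Icc 1 i).filter (fun j => ¬ N < π j ∧
      ¬ ∀ l ∈ Finset.Icc (1 : ℕ) i, π l ≠ π j + N) with hB
  -- membership characterizations
  have hmemA : ∀ j, j ∈ A ↔ j ∈ Finset.Icc 1 i ∧ N < π j := by
    intro j; rw [hA, Finset.mem_filter]
  have hmemB : ∀ j, j ∈ B ↔ j ∈ Finset.Icc 1 i ∧ π j ≤ N ∧
      ∃ l ∈ Finset.Icc 1 i, π l = π j + N := by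
    intro j
    rw [hB, Finset.mem_filter]
    constructor
    · rintro ⟨h1, h2, h3⟩
      push_neg at h3
      exact ⟨h1, by omega, h3⟩
    · rintro ⟨h1, h2, h3⟩
      refine ⟨h1, by omega, ?_⟩
      push_neg
      exact h3
  -- split the sum
  have h1 := Finset.sum_filter_add_sum_filter_not (Finset.Icc 1 i) (fun j => N < π j)
    (fun j => x (π j))
  have h2 := Finset.sum_filter_add_sum_filter_not
    ((Finset.Icc 1 i).filter (fun j => ¬ N < π j))
    (fun j => ¬ ∀ l ∈ Finset.Icc (1 : ℕ) i, π l ≠ π j + N) (fun j => x (π j))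
  have hIeq : ((Finset.Icc 1 i).filter (fun j => ¬ N < π j)).filter
      (fun j => ¬¬ ∀ l ∈ Finset.Icc (1 : ℕ) i, π l ≠ π j + N) = Iset N π i := by
    rw [Finset.filter_filter, Iset]
    apply Finset.filter_congr
    intro j _
    simp only [not_lt, not_not, eq_iff_iff]
  have hBeq : ((Finset.Icc 1 i).filter (fun j => ¬ N < π j)).filter
      (fun j => ¬ ∀ l ∈ Finset.Icc (1 : ℕ) i, π l ≠ π j + N) = B := by
    rw [Finset.filter_filter, hB]
  rw [hBeq, hIeq] at h2
  have hsplit : (∑ j ∈ Finset.Icc 1 i, x (π j)) =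
      (∑ j ∈ A, x (π j)) + ((∑ j ∈ B, x (π j)) + (∑ j ∈ Iset N π i, x (π j))) := by
    rw [← h1, ← h2, ← hA]
  -- values on A
  have hAval : ∀ j ∈ A, x (π j) = 1 - x (π j - N) := by
    intro j hj
    rw [hmemA] at hj
    have hmem := hπmem j hj.1
    simp only [Set.mem_Icc] at hmem
    have h1 : π j - N ∈ Finset.Icc 1 N := by simp only [Finset.mem_Icc]; omega
    have h2 := hx.2.2 _ h1
    rw [Nat.sub_add_cancel (by omega)] at h2
    rw [h2]
  -- the pairing between A and B
  have hpair : (∑ j ∈ A, x (π j - N)) = ∑ l ∈ B, x (π l) := by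
    apply Finset.sum_nbij' (fun j => τ (π j - N)) (fun l => τ (π l + N))
    · -- maps A to B
      intro a ha
      rw [hmemA] at ha
      have has : a ∈ Set.Icc 1 (2*N) := hTs a ha.1
      have hπa := hπmem a ha.1
      simp only [Set.mem_Icc] at hπa
      have hmN : π a - N ∈ Set.Icc 1 (2*N) := by simp only [Set.mem_Icc]; omega
      obtain ⟨b, hb, hbe⟩ := hbij.surjOn hmN
      have hτs : τ (π a - N) ∈ Set.Icc 1 (2*N) := Function.invFunOn_mem ⟨b, hb, hbe⟩
      have hτe : π (τ (π a - N)) = π a - N := Function.invFunOn_eq ⟨b, hb, hbe⟩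
      have hπτ : π (τ (π a - N)) ≤ N := by omega
      have hlt : τ (π a - N) < a := horder _ _ hτs has hπτ (by rw [hτe]; omega)
      rw [hmemB]
      simp only [Set.mem_Icc] at hτs
      have haIcc := Finset.mem_Icc.1 ha.1
      refine ⟨Finset.mem_Icc.2 ⟨hτs.1, by omega⟩, hπτ, a, ha.1, by rw [hτe]; omega⟩
    · -- maps B to A
      intro l hl
      rw [hmemB] at hl
      obtain ⟨hlT, hlN, j, hjT, hje⟩ := hl
      have hjs : j ∈ Set.Icc 1 (2*N) := hTs j hjT
      have hτj : τ (π l + N) = j := by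
        rw [← hje]
        exact hbij.injOn.leftInvOn_invFunOn hjs
      rw [hτj, hmemA]
      have hπl := hπmem l hlT
      simp only [Set.mem_Icc] at hπl
      exact ⟨hjT, by omega⟩
    · -- left inverse on A
      intro a ha
      rw [hmemA] at ha
      have has : a ∈ Set.Icc 1 (2*N) := hTs a ha.1
      have hπa := hπmem a ha.1
      simp only [Set.mem_Icc] at hπa
      have hmN : π a - N ∈ Set.Icc 1 (2*N) := by simp only [Set.mem_Icc]; omega
      obtain ⟨b, hb, hbe⟩ := hbij.surjOn hmN
      have hτe : π (τ (π a - N)) = π a - N := Function.invFunOn_eq ⟨b, hb, hbe⟩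
      rw [hτe, Nat.sub_add_cancel (by omega)]
      exact hbij.injOn.leftInvOn_invFunOn has
    · -- right inverse on B
      intro l hl
      rw [hmemB] at hl
      obtain ⟨hlT, hlN, j, hjT, hje⟩ := hl
      have hjs : j ∈ Set.Icc 1 (2*N) := hTs j hjT
      have hτj : τ (π l + N) = j := by
        rw [← hje]
        exact hbij.injOn.leftInvOn_invFunOn hjs
      rw [hτj, hje, Nat.add_sub_cancel]
      exact hbij.injOn.leftInvOn_invFunOn (hTs l hlT)
    · -- values agree
      intro a ha
      rw [hmemA] at ha
      have hπa := hπmem a ha.1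
      simp only [Set.mem_Icc] at hπa
      have hmN : π a - N ∈ Set.Icc 1 (2*N) := by simp only [Set.mem_Icc]; omega
      obtain ⟨b, hb, hbe⟩ := hbij.surjOn hmN
      rw [Function.invFunOn_eq (f := π) ⟨b, hb, hbe⟩]
  have hAB : (∑ j ∈ A, x (π j)) + (∑ j ∈ B, x (π j)) = (A.card : ℝ) := by
    have hAe : (∑ j ∈ A, x (π j)) = (A.card : ℝ) - ∑ j ∈ A, x (π j - N) := by
      rw [Finset.sum_congr rfl hAval, Finset.sum_sub_distrib]
      simp
    rw [hAe, hpair]; ring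
  have hσ : (sigma N π i : ℝ) = (A.card : ℝ) := by rfl
  rw [hσ, hsplit]
  linarith


lemma one_sub_sum_le_prod {ι : Type*} (F : Finset ι) (z : ι → ℝ)
    (h0 : ∀ j ∈ F, 0 ≤ z j) (h1 : ∀ j ∈ F, z j ≤ 1) :
    1 - ∑ j ∈ F, z j ≤ ∏ j ∈ F, (1 - z j) := by
  classical
  revert h0 h1
  refine Finset.induction_on F ?_ ?_
  · intro _ _; simp
  · intro a F haF ih h0 h1
    rw [Finset.sum_insert haF, Finset.prod_insert haF]
    have hz0 : 0 ≤ z a := h0 a (Finset.mem_insert_self a F)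
    have hz1 : z a ≤ 1 := h1 a (Finset.mem_insert_self a F)
    have ih' := ih (fun j hj => h0 j (Finset.mem_insert_of_mem hj))
      (fun j hj => h1 j (Finset.mem_insert_of_mem hj))
    have hsum : 0 ≤ ∑ j ∈ F, z j :=
      Finset.sum_nonneg (fun j hj => h0 j (Finset.mem_insert_of_mem hj))
    nlinarith [mul_le_mul_of_nonneg_left ih' (by linarith : (0:ℝ) ≤ 1 - z a),
      mul_nonneg hz0 hsum]

lemma key_upper {ι : Type*} (F : Finset ι) (z : ι → ℝ) {s : ℝ} (hs : 1 ≤ s)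
    (h0 : ∀ j ∈ F, 0 ≤ z j) (h1 : ∀ j ∈ F, z j ≤ 1) :
    s * (1 - ∏ j ∈ F, (1 - z j / s)) ≤ min s (∑ j ∈ F, z j) := by
  have hs0 : 0 < s := by linarith
  have hf0 : ∀ j ∈ F, 0 ≤ 1 - z j / s := by
    intro j hj
    have hd : z j / s ≤ 1 := by rw [div_le_one hs0]; linarith [h1 j hj]
    linarith
  have hP0 : 0 ≤ ∏ j ∈ F, (1 - z j / s) := Finset.prod_nonneg hf0
  refine le_min (by nlinarith) ?_
  have hW : 1 - ∑ j ∈ F, z j / s ≤ ∏ j ∈ F, (1 - z j / s) :=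
    one_sub_sum_le_prod F _ (fun j hj => div_nonneg (h0 j hj) hs0.le)
      (fun j hj => by rw [div_le_one hs0]; linarith [h1 j hj])
  rw [← Finset.sum_div] at hW
  have h2 : s * (1 - ∏ j ∈ F, (1 - z j / s)) ≤ s * ((∑ j ∈ F, z j) / s) :=
    mul_le_mul_of_nonneg_left (by linarith) hs0.le
  rwa [mul_div_cancel₀ _ (ne_of_gt hs0)] at h2

lemma key_lower {ι : Type*} (F : Finset ι) (z : ι → ℝ) {s : ℝ} (hs : 1 ≤ s)
    (h0 : ∀ j ∈ F, 0 ≤ z j) (h1 : ∀ j ∈ F, z j ≤ 1) :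
    (1 - 1 / Real.exp 1) * min s (∑ j ∈ F, z j) ≤ s * (1 - ∏ j ∈ F, (1 - z j / s)) := by
  have hs0 : 0 < s := by linarith
  have hS0 : 0 ≤ ∑ j ∈ F, z j := Finset.sum_nonneg h0
  set S := ∑ j ∈ F, z j with hSdef
  set m := min s S with hm
  have hm0 : 0 ≤ m := le_min hs0.le hS0
  have hms : m ≤ s := min_le_left _ _
  have hmS : m ≤ S := min_le_right _ _
  set t := m / s with ht
  have ht0 : 0 ≤ t := div_nonneg hm0 hs0.le
  have ht1 : t ≤ 1 := by rw [ht, div_le_one hs0]; exact hms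
  have hPexp : (∏ j ∈ F, (1 - z j / s)) ≤ Real.exp (-t) := by
    have hstep : (∏ j ∈ F, (1 - z j / s)) ≤ ∏ j ∈ F, Real.exp (-(z j / s)) := by
      apply Finset.prod_le_prod
      · intro j hj
        have hd : z j / s ≤ 1 := by rw [div_le_one hs0]; linarith [h1 j hj]
        linarith
      · intro j hj
        have := Real.add_one_le_exp (-(z j / s))
        linarith
    have hexp : ∏ j ∈ F, Real.exp (-(z j / s)) = Real.exp (-(S / s)) := by
      rw [← Real.exp_sum]
      congr 1
      rw [hSdef, Finset.sum_div]
      exact Finset.sum_neg_distrib (f := fun j => z j / s)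
    rw [hexp] at hstep
    have hdiv : m / s ≤ S / s := by gcongr
    exact le_trans hstep (Real.exp_le_exp.2 (by rw [ht]; linarith))
  have hconv := convexOn_exp.2 (Set.mem_univ (0:ℝ)) (Set.mem_univ (-1:ℝ))
    (by linarith : (0:ℝ) ≤ 1 - t) ht0 (by ring)
  simp only [smul_eq_mul, mul_zero, mul_neg_one, zero_add, Real.exp_zero, mul_one] at hconv
  have he : Real.exp (-1:ℝ) = 1 / Real.exp 1 := by rw [Real.exp_neg, one_div]
  rw [he] at hconv
  have hinner : (1 - 1/Real.exp 1) * t ≤ 1 - ∏ j ∈ F, (1 - z j / s) := by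
    nlinarith [hPexp, hconv]
  calc (1 - 1/Real.exp 1) * m = s * ((1 - 1/Real.exp 1) * t) := by
        rw [ht]; field_simp
    _ ≤ s * (1 - ∏ j ∈ F, (1 - z j / s)) := mul_le_mul_of_nonneg_left hinner hs0.le

lemma integrable_of_bdd {Ω : Type*} [MeasurableSpace Ω] {μ : Measure Ω} [IsFiniteMeasure μ]
    {f : Ω → ℝ} (hf : Measurable f) (C : ℝ) (h : ∀ ω, |f ω| ≤ C) : Integrable f μ :=
  Integrable.mono' (integrable_const C) hf.aestronglyMeasurable
    (Filter.Eventually.of_forall (fun ω => by rw [Real.norm_eq_abs]; exact h ω))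


/-- **Expected gain of rounded states (rounding is a `(1-1/e)`-approximation).**
If `X` is a random integral cache state satisfying, for each `i ∈ {1,…,K-1}`,
`E[∏_{j ∈ I_i} (1 - X_{π j}/(k - σ_i))] ≤ ∏_{j ∈ I_i} (1 - y_{π j}/(k - σ_i))`,
then `E[G(X)] ≥ (1 - 1/e) · G(y)`. -/
theorem expected_gain_ge
    {Ω : Type*} [MeasurableSpace Ω] (μ : Measure Ω) [IsProbabilityMeasure μ]
    (N k h : ℕ) (hN : 0 < N) (hk : 0 < k) (hkh : k ≤ h) (hhN : h ≤ N)
    (cf : ℝ) (hcf : 0 < cf) (c : ℕ → ℝ) (π : ℕ → ℕ)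
    (hreq : Request N cf c π)
    (y : ℕ → ℝ) (hy : IsFrac N h y)
    (X : Ω → ℕ → ℝ)
    (hXmeas : ∀ i, Measurable fun ω => X ω i)
    (hXint : ∀ ω, IsInt N h (X ω))
    (hprod : ∀ i ∈ Finset.Icc 1 (Kmin N k π - 1),
      (∫ ω, ∏ j ∈ Iset N π i, (1 - X ω (π j) / ((k : ℝ) - sigma N π i)) ∂μ)
        ≤ ∏ j ∈ Iset N π i, (1 - y (π j) / ((k : ℝ) - sigma N π i))) :
    (1 - 1 / Real.exp 1) * gain N k c π y ≤ ∫ ω, gain N k c π (X ω) ∂μ := by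

  classical
  obtain ⟨hc0, hcN, hbij, hsort, horder⟩ := hreq
  have hkN : k ≤ N := le_trans hkh hhN
  have facts : ∀ i ∈ Finset.Icc 1 (Kmin N k π - 1), 1 ≤ i ∧ i < 2*N ∧ sigma N π i < k :=
    fun i hi => mem_facts N k π hN hk hkN hbij hi
  have hα : ∀ i ∈ Finset.Icc 1 (Kmin N k π - 1), 0 ≤ alpha c π i := by
    intro i hi
    obtain ⟨h1, h2, _⟩ := facts i hi
    have := hsort i h1 h2
    simp only [alpha, sub_nonneg]
    exact this
  have hs1 : ∀ i ∈ Finset.Icc 1 (Kmin N k π - 1), (1:ℝ) ≤ (k:ℝ) - sigma N π i := by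
    intro i hi
    obtain ⟨_, _, h3⟩ := facts i hi
    have h4 : (sigma N π i : ℝ) + 1 ≤ (k:ℝ) := by exact_mod_cast h3
    linarith
  have hπIcc : ∀ i ∈ Finset.Icc 1 (Kmin N k π - 1), ∀ j ∈ Iset N π i,
      π j ∈ Finset.Icc 1 (2 * N) := by
    intro i hi j hj
    obtain ⟨_, h2, _⟩ := facts i hi
    have hjT : j ∈ Finset.Icc 1 i := by unfold Iset at hj; exact (Finset.mem_filter.1 hj).1
    simp only [Finset.mem_Icc] at hjT
    have hm := hbij.mapsTo (show j ∈ Set.Icc 1 (2 * N) from ⟨hjT.1, by omega⟩)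
    simp only [Set.mem_Icc] at hm
    exact Finset.mem_Icc.2 hm
  have hxIcc : ∀ x : ℕ → ℝ, IsFrac N h x → ∀ i ∈ Finset.Icc 1 (Kmin N k π - 1),
      ∀ j ∈ Iset N π i, x (π j) ∈ Set.Icc (0:ℝ) 1 :=
    fun x hx i hi j hj => hx.1 _ (hπIcc i hi j hj)
  have gain_eq : ∀ x : ℕ → ℝ, IsFrac N h x → gain N k c π x =
      ∑ i ∈ Finset.Icc 1 (Kmin N k π - 1),
        alpha c π i * min ((k:ℝ) - sigma N π i) (∑ j ∈ Iset N π i, x (π j)) := by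
    intro x hx
    unfold gain
    apply Finset.sum_congr rfl
    intro i hi
    obtain ⟨_, h2, _⟩ := facts i hi
    rw [sum_sub_sigma N h i π hbij horder x hx (by omega)]
  have hXfrac : ∀ ω, IsFrac N h (X ω) := fun ω => (hXint ω).1
  -- Step 1: (1 - 1/e) * gain y ≤ aux y
  have hstep2 : (1 - 1 / Real.exp 1) * gain N k c π y ≤ aux N k c π y := by
    rw [gain_eq y hy, Finset.mul_sum]
    unfold aux
    apply Finset.sum_le_sum
    intro i hi
    have key : (1 - 1 / Real.exp 1) *
        min ((k:ℝ) - sigma N π i) (∑ j ∈ Iset N π i, y (π j)) ≤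
        ((k:ℝ) - sigma N π i) *
          (1 - ∏ j ∈ Iset N π i, (1 - y (π j) / ((k:ℝ) - sigma N π i))) :=
      key_lower (Iset N π i) (fun j => y (π j)) (hs1 i hi)
        (fun j hj => (hxIcc y hy i hi j hj).1) (fun j hj => (hxIcc y hy i hi j hj).2)
    calc (1 - 1 / Real.exp 1) *
        (alpha c π i * min ((k:ℝ) - sigma N π i) (∑ j ∈ Iset N π i, y (π j)))
        = alpha c π i * ((1 - 1 / Real.exp 1) *
            min ((k:ℝ) - sigma N π i) (∑ j ∈ Iset N π i, y (π j))) := by ring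
      _ ≤ alpha c π i * (((k:ℝ) - sigma N π i) *
            (1 - ∏ j ∈ Iset N π i, (1 - y (π j) / ((k:ℝ) - sigma N π i)))) :=
          mul_le_mul_of_nonneg_left key (hα i hi)
      _ = alpha c π i * ((k:ℝ) - sigma N π i) *
            (1 - ∏ j ∈ Iset N π i, (1 - y (π j) / ((k:ℝ) - sigma N π i))) := by ring
  -- Pointwise: aux (X ω) ≤ gain (X ω)
  have hptwise : ∀ ω, aux N k c π (X ω) ≤ gain N k c π (X ω) := by
    intro ω
    rw [gain_eq _ (hXfrac ω)]
    unfold aux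
    apply Finset.sum_le_sum
    intro i hi
    have key : ((k:ℝ) - sigma N π i) *
        (1 - ∏ j ∈ Iset N π i, (1 - X ω (π j) / ((k:ℝ) - sigma N π i))) ≤
        min ((k:ℝ) - sigma N π i) (∑ j ∈ Iset N π i, X ω (π j)) :=
      key_upper (Iset N π i) (fun j => X ω (π j)) (hs1 i hi)
        (fun j hj => (hxIcc _ (hXfrac ω) i hi j hj).1)
        (fun j hj => (hxIcc _ (hXfrac ω) i hi j hj).2)
    calc alpha c π i * ((k:ℝ) - sigma N π i) *
        (1 - ∏ j ∈ Iset N π i, (1 - X ω (π j) / ((k:ℝ) - sigma N π i)))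
        = alpha c π i * (((k:ℝ) - sigma N π i) *
            (1 - ∏ j ∈ Iset N π i, (1 - X ω (π j) / ((k:ℝ) - sigma N π i)))) := by ring
      _ ≤ alpha c π i * min ((k:ℝ) - sigma N π i) (∑ j ∈ Iset N π i, X ω (π j)) :=
          mul_le_mul_of_nonneg_left key (hα i hi)
  -- Integrability of the products
  have hprodbd : ∀ i ∈ Finset.Icc 1 (Kmin N k π - 1), ∀ ω,
      |∏ j ∈ Iset N π i, (1 - X ω (π j) / ((k:ℝ) - sigma N π i))| ≤ 1 := by
    intro i hi ω
    have hs' := hs1 i hi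
    have habs : ∀ j ∈ Iset N π i, 0 ≤ 1 - X ω (π j) / ((k:ℝ) - sigma N π i) ∧
        1 - X ω (π j) / ((k:ℝ) - sigma N π i) ≤ 1 := by
      intro j hj
      obtain ⟨hx0, hx1⟩ := hxIcc _ (hXfrac ω) i hi j hj
      constructor
      · have hd : X ω (π j) / ((k:ℝ) - sigma N π i) ≤ 1 := by
          rw [div_le_one (by linarith)]; linarith
        linarith
      · have hd : 0 ≤ X ω (π j) / ((k:ℝ) - sigma N π i) := div_nonneg hx0 (by linarith)
        linarith
    rw [abs_le]
    constructor
    · have := Finset.prod_nonneg (fun j hj => (habs j hj).1)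
      linarith
    · exact Finset.prod_le_one (fun j hj => (habs j hj).1) (fun j hj => (habs j hj).2)
  have hprodint : ∀ i ∈ Finset.Icc 1 (Kmin N k π - 1),
      Integrable (fun ω => ∏ j ∈ Iset N π i,
        (1 - X ω (π j) / ((k:ℝ) - sigma N π i))) μ := by
    intro i hi
    exact integrable_of_bdd (Finset.measurable_prod _
      (fun j _ => measurable_const.sub ((hXmeas (π j)).div_const _))) 1 (hprodbd i hi)
  have hauxterm : ∀ i ∈ Finset.Icc 1 (Kmin N k π - 1),
      Integrable (fun ω => alpha c π i * ((k:ℝ) - sigma N π i) *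
        (1 - ∏ j ∈ Iset N π i, (1 - X ω (π j) / ((k:ℝ) - sigma N π i)))) μ := by
    intro i hi
    exact ((integrable_const (1:ℝ)).sub (hprodint i hi)).const_mul
      (alpha c π i * ((k:ℝ) - sigma N π i))
  have hauxfun : (fun ω => aux N k c π (X ω)) =
      fun ω => ∑ i ∈ Finset.Icc 1 (Kmin N k π - 1),
        alpha c π i * ((k:ℝ) - sigma N π i) *
          (1 - ∏ j ∈ Iset N π i, (1 - X ω (π j) / ((k:ℝ) - sigma N π i))) := rfl
  have hauxI : ∫ ω, aux N k c π (X ω) ∂μ =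
      ∑ i ∈ Finset.Icc 1 (Kmin N k π - 1),
        alpha c π i * ((k:ℝ) - sigma N π i) *
          (1 - ∫ ω, ∏ j ∈ Iset N π i, (1 - X ω (π j) / ((k:ℝ) - sigma N π i)) ∂μ) := by
    rw [hauxfun, integral_finset_sum _ hauxterm]
    apply Finset.sum_congr rfl
    intro i hi
    rw [integral_const_mul, integral_sub (integrable_const 1) (hprodint i hi), integral_const]
    simp
  -- Step 2: aux y ≤ ∫ aux (X ω)
  have hstep3 : aux N k c π y ≤ ∫ ω, aux N k c π (X ω) ∂μ := by
    rw [hauxI]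
    unfold aux
    apply Finset.sum_le_sum
    intro i hi
    have hcoef : 0 ≤ alpha c π i * ((k:ℝ) - sigma N π i) :=
      mul_nonneg (hα i hi) (by linarith [hs1 i hi])
    have hp := hprod i hi
    exact mul_le_mul_of_nonneg_left (by linarith) hcoef
  -- Integrability of gain and aux along X
  have hgainint : Integrable (fun ω => gain N k c π (X ω)) μ := by
    have heq : (fun ω => gain N k c π (X ω)) =
        fun ω => ∑ i ∈ Finset.Icc 1 (Kmin N k π - 1),
          alpha c π i * min ((k:ℝ) - sigma N π i) (∑ j ∈ Iset N π i, X ω (π j)) :=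
      funext (fun ω => gain_eq _ (hXfrac ω))
    rw [heq]
    apply integrable_finset_sum
    intro i hi
    apply Integrable.const_mul
    apply integrable_of_bdd
      (measurable_const.min (Finset.measurable_sum _ (fun j _ => hXmeas (π j)))) ((k:ℝ))
    intro ω
    have hs' := hs1 i hi
    have hsum0 : 0 ≤ ∑ j ∈ Iset N π i, X ω (π j) :=
      Finset.sum_nonneg (fun j hj => (hxIcc _ (hXfrac ω) i hi j hj).1)
    have hσ0 : (0:ℝ) ≤ (sigma N π i : ℝ) := Nat.cast_nonneg _
    have hk0 : (0:ℝ) ≤ (k:ℝ) := Nat.cast_nonneg _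
    rw [abs_le]
    constructor
    · have hge : (0:ℝ) ≤ min ((k:ℝ) - sigma N π i) (∑ j ∈ Iset N π i, X ω (π j)) :=
        le_min (by linarith) hsum0
      linarith
    · calc min ((k:ℝ) - sigma N π i) (∑ j ∈ Iset N π i, X ω (π j))
          ≤ (k:ℝ) - sigma N π i := min_le_left _ _
        _ ≤ (k:ℝ) := by linarith
  have hauxint : Integrable (fun ω => aux N k c π (X ω)) μ := by
    rw [hauxfun]
    exact integrable_finset_sum _ hauxterm
  calc (1 - 1 / Real.exp 1) * gain N k c π y ≤ aux N k c π y := hstep2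
    _ ≤ ∫ ω, aux N k c π (X ω) ∂μ := hstep3
    _ ≤ ∫ ω, gain N k c π (X ω) ∂μ := integral_mono hauxint hgainint hptwise


end ACAI
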